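/- There exists ρ₀ ∈ (0,1) such that for every ρ ∈ (ρ₀,1) and every ε > 0, the symmetric 10×10 real matrix A_{ρ,ε} is positive definite. -/

import Mathlib

noncomputable section

open Real

/-- The symmetric `10 × 10` matrix `A_{ρ,ε}` arising in the reduced-energy expansion. -/
def Amat (ρ ε : ℝ) : Matrix (Fin 10) (Fin 10) ℝ :=
  !![128 * π * (2 * ρ ^ 2 + 1) * ε / (ρ ^ 2 - 1) ^ 4,
      -(384 * π * (ρ ^ 3 + ρ) * ε ^ ((3 : ℝ) / 2)) / (ρ ^ 2 - 1) ^ 5, 0, 0, 0, 0, 0, 0, 0, 0;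
    -(384 * π * (ρ ^ 3 + ρ) * ε ^ ((3 : ℝ) / 2)) / (ρ ^ 2 - 1) ^ 5,
      192 * π * (3 * ρ ^ 4 + 6 * ρ ^ 2 + 1) * ε ^ 2 / (ρ ^ 2 - 1) ^ 6, 0, 0, 0, 0, 0, 0, 0, 0;
    0, 0, 192 * π * (3 * ρ ^ 4 + 6 * ρ ^ 2 + 1) * ε ^ 2 / (ρ ^ 2 - 1) ^ 6, 0,
      192 * π * ρ * (ρ ^ 2 + 1) * ε ^ 2 / (ρ ^ 2 - 1) ^ 5, 0, 0, 0, 0, 0;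
    0, 0, 0, 16 * π * (2 * ρ ^ 2 + 1) * ε ^ 2 / (ρ ^ 2 - 1) ^ 4, 0, 0, 0, 0, 0, 0;
    0, 0, 192 * π * ρ * (ρ ^ 2 + 1) * ε ^ 2 / (ρ ^ 2 - 1) ^ 5, 0,
      32 * π * (2 * ρ ^ 2 + 1) * ε ^ 2 / (ρ ^ 2 - 1) ^ 4, 0, 0, 0, 0, 0;
    0, 0, 0, 0, 0, 16 * π * (2 * ρ ^ 2 + 1) * ε ^ 2 / (ρ ^ 2 - 1) ^ 4, 0, 0, 0, 0;
    0, 0, 0, 0, 0, 0, 64 * π * ε / (1 - ρ ^ 2) ^ 2, 0,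
      128 * π * ε ^ ((5 : ℝ) / 2) * ρ ^ 3 / (1 - ρ ^ 2) ^ 5, 0;
    0, 0, 0, 0, 0, 0, 0, 64 * π * ε / (1 - ρ ^ 2) ^ 2, 0,
      -(128 * π * ε ^ ((5 : ℝ) / 2) * ρ ^ 3) / (1 - ρ ^ 2) ^ 5;
    0, 0, 0, 0, 0, 0, 128 * π * ε ^ ((5 : ℝ) / 2) * ρ ^ 3 / (1 - ρ ^ 2) ^ 5, 0,
      2240 * π * ε ^ 4 / (1 - ρ ^ 2) ^ 8, 0;
    0, 0, 0, 0, 0, 0, 0, -(128 * π * ε ^ ((5 : ℝ) / 2) * ρ ^ 3) / (1 - ρ ^ 2) ^ 5, 0,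
      2240 * π * ε ^ 4 / (1 - ρ ^ 2) ^ 8]
private lemma sc1_0 : Fin.succ (0 : Fin 1) = (1 : Fin 2) := rfl
private lemma sc2_0 : Fin.succ (0 : Fin 2) = (1 : Fin 3) := rfl
private lemma sc2_1 : Fin.succ (1 : Fin 2) = (2 : Fin 3) := rfl
private lemma sc3_0 : Fin.succ (0 : Fin 3) = (1 : Fin 4) := rfl
private lemma sc3_1 : Fin.succ (1 : Fin 3) = (2 : Fin 4) := rfl
private lemma sc3_2 : Fin.succ (2 : Fin 3) = (3 : Fin 4) := rfl
private lemma sc4_0 : Fin.succ (0 : Fin 4) = (1 : Fin 5) := rfl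
private lemma sc4_1 : Fin.succ (1 : Fin 4) = (2 : Fin 5) := rfl
private lemma sc4_2 : Fin.succ (2 : Fin 4) = (3 : Fin 5) := rfl
private lemma sc4_3 : Fin.succ (3 : Fin 4) = (4 : Fin 5) := rfl
private lemma sc5_0 : Fin.succ (0 : Fin 5) = (1 : Fin 6) := rfl
private lemma sc5_1 : Fin.succ (1 : Fin 5) = (2 : Fin 6) := rfl
private lemma sc5_2 : Fin.succ (2 : Fin 5) = (3 : Fin 6) := rfl
private lemma sc5_3 : Fin.succ (3 : Fin 5) = (4 : Fin 6) := rfl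
private lemma sc5_4 : Fin.succ (4 : Fin 5) = (5 : Fin 6) := rfl
private lemma sc6_0 : Fin.succ (0 : Fin 6) = (1 : Fin 7) := rfl
private lemma sc6_1 : Fin.succ (1 : Fin 6) = (2 : Fin 7) := rfl
private lemma sc6_2 : Fin.succ (2 : Fin 6) = (3 : Fin 7) := rfl
private lemma sc6_3 : Fin.succ (3 : Fin 6) = (4 : Fin 7) := rfl
private lemma sc6_4 : Fin.succ (4 : Fin 6) = (5 : Fin 7) := rfl
private lemma sc6_5 : Fin.succ (5 : Fin 6) = (6 : Fin 7) := rfl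
private lemma sc7_0 : Fin.succ (0 : Fin 7) = (1 : Fin 8) := rfl
private lemma sc7_1 : Fin.succ (1 : Fin 7) = (2 : Fin 8) := rfl
private lemma sc7_2 : Fin.succ (2 : Fin 7) = (3 : Fin 8) := rfl
private lemma sc7_3 : Fin.succ (3 : Fin 7) = (4 : Fin 8) := rfl
private lemma sc7_4 : Fin.succ (4 : Fin 7) = (5 : Fin 8) := rfl
private lemma sc7_5 : Fin.succ (5 : Fin 7) = (6 : Fin 8) := rfl
private lemma sc7_6 : Fin.succ (6 : Fin 7) = (7 : Fin 8) := rfl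
private lemma sc8_0 : Fin.succ (0 : Fin 8) = (1 : Fin 9) := rfl
private lemma sc8_1 : Fin.succ (1 : Fin 8) = (2 : Fin 9) := rfl
private lemma sc8_2 : Fin.succ (2 : Fin 8) = (3 : Fin 9) := rfl
private lemma sc8_3 : Fin.succ (3 : Fin 8) = (4 : Fin 9) := rfl
private lemma sc8_4 : Fin.succ (4 : Fin 8) = (5 : Fin 9) := rfl
private lemma sc8_5 : Fin.succ (5 : Fin 8) = (6 : Fin 9) := rfl
private lemma sc8_6 : Fin.succ (6 : Fin 8) = (7 : Fin 9) := rfl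
private lemma sc8_7 : Fin.succ (7 : Fin 8) = (8 : Fin 9) := rfl
private lemma sc9_0 : Fin.succ (0 : Fin 9) = (1 : Fin 10) := rfl
private lemma sc9_1 : Fin.succ (1 : Fin 9) = (2 : Fin 10) := rfl
private lemma sc9_2 : Fin.succ (2 : Fin 9) = (3 : Fin 10) := rfl
private lemma sc9_3 : Fin.succ (3 : Fin 9) = (4 : Fin 10) := rfl
private lemma sc9_4 : Fin.succ (4 : Fin 9) = (5 : Fin 10) := rfl
private lemma sc9_5 : Fin.succ (5 : Fin 9) = (6 : Fin 10) := rfl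
private lemma sc9_6 : Fin.succ (6 : Fin 9) = (7 : Fin 10) := rfl
private lemma sc9_7 : Fin.succ (7 : Fin 9) = (8 : Fin 10) := rfl
private lemma sc9_8 : Fin.succ (8 : Fin 9) = (9 : Fin 10) := rfl

private lemma quad_nonneg {a b c : ℝ} (ha : 0 < a) (hd : b^2 < a*c) (u v : ℝ) :
    0 ≤ a*u^2 + 2*b*(u*v) + c*v^2 := by
  nlinarith [sq_nonneg (a*u+b*v), sq_nonneg v, mul_nonneg (sub_pos.mpr hd).le (sq_nonneg v)]

private lemma quad_pos {a b c : ℝ} (ha : 0 < a) (hd : b^2 < a*c) {u v : ℝ}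
    (h : u ≠ 0 ∨ v ≠ 0) : 0 < a*u^2 + 2*b*(u*v) + c*v^2 := by
  rcases h with h | h
  · rcases eq_or_ne v 0 with rfl | hv
    · have h2 : 0 < u^2 := by positivity
      nlinarith [sq_nonneg u]
    · have h2 : 0 < v^2 := by positivity
      nlinarith [sq_nonneg (a*u+b*v), mul_pos (sub_pos.mpr hd) h2]
  · have h2 : 0 < v^2 := by positivity
    nlinarith [sq_nonneg (a*u+b*v), mul_pos (sub_pos.mpr hd) h2]

private lemma blk1 (d A B C u v : ℝ) (hd : d ≠ 0) :
    (A/d^4 * u^2 + 2*(B/d^5)*(u*v) + C/d^6 * v^2) * d^10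
      = A*(d^3*u)^2 + 2*B*((d^3*u)*(d^2*v)) + C*(d^2*v)^2 := by
  field_simp

private lemma blk2 (d A B C u v : ℝ) (hd : d ≠ 0) :
    (A/d^2 * u^2 + 2*(B/d^5)*(u*v) + C/d^8 * v^2) * d^10
      = A*(d^4*u)^2 + 2*B*((d^4*u)*(d*v)) + C*(d*v)^2 := by
  field_simp

private lemma blkd (d A u : ℝ) (hd : d ≠ 0) :
    (A/d^4 * u^2) * d^10 = A*(d^3*u)^2 := by
  field_simp

open Matrix in
private lemma Amat_quadform (ρ ε : ℝ) (hρ : (1:ℝ) - ρ^2 ≠ 0) (x : Fin 10 → ℝ) :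
    (star x ⬝ᵥ Amat ρ ε *ᵥ x) * (ρ^2 - 1)^10 =
      (128*π*(2*ρ^2+1)*ε * ((ρ^2-1)^3 * x 0)^2
        + 2*(-(384*π*(ρ^3+ρ)*ε^((3:ℝ)/2))) * (((ρ^2-1)^3 * x 0) * ((ρ^2-1)^2 * x 1))
        + 192*π*(3*ρ^4+6*ρ^2+1)*ε^2 * ((ρ^2-1)^2 * x 1)^2)
      + (32*π*(2*ρ^2+1)*ε^2 * ((ρ^2-1)^3 * x 4)^2
        + 2*(192*π*ρ*(ρ^2+1)*ε^2) * (((ρ^2-1)^3 * x 4) * ((ρ^2-1)^2 * x 2))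
        + 192*π*(3*ρ^4+6*ρ^2+1)*ε^2 * ((ρ^2-1)^2 * x 2)^2)
      + 16*π*(2*ρ^2+1)*ε^2 * ((ρ^2-1)^3 * x 3)^2
      + 16*π*(2*ρ^2+1)*ε^2 * ((ρ^2-1)^3 * x 5)^2
      + (64*π*ε * ((1-ρ^2)^4 * x 6)^2
        + 2*(128*π*ε^((5:ℝ)/2)*ρ^3) * (((1-ρ^2)^4 * x 6) * ((1-ρ^2) * x 8))
        + 2240*π*ε^4 * ((1-ρ^2) * x 8)^2)
      + (64*π*ε * ((1-ρ^2)^4 * x 7)^2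
        + 2*(-(128*π*ε^((5:ℝ)/2)*ρ^3)) * (((1-ρ^2)^4 * x 7) * ((1-ρ^2) * x 9))
        + 2240*π*ε^4 * ((1-ρ^2) * x 9)^2) := by
  have hρ' : (ρ:ℝ)^2 - 1 ≠ 0 := fun h => hρ (by linarith)
  have hcalc : star x ⬝ᵥ Amat ρ ε *ᵥ x =
      (128*π*(2*ρ^2+1)*ε/(ρ^2-1)^4 * (x 0)^2
        + 2*((-(384*π*(ρ^3+ρ)*ε^((3:ℝ)/2)))/(ρ^2-1)^5)*(x 0 * x 1)
        + 192*π*(3*ρ^4+6*ρ^2+1)*ε^2/(ρ^2-1)^6 * (x 1)^2)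
      + (32*π*(2*ρ^2+1)*ε^2/(ρ^2-1)^4 * (x 4)^2
        + 2*(192*π*ρ*(ρ^2+1)*ε^2/(ρ^2-1)^5)*(x 4 * x 2)
        + 192*π*(3*ρ^4+6*ρ^2+1)*ε^2/(ρ^2-1)^6 * (x 2)^2)
      + 16*π*(2*ρ^2+1)*ε^2/(ρ^2-1)^4 * (x 3)^2
      + 16*π*(2*ρ^2+1)*ε^2/(ρ^2-1)^4 * (x 5)^2
      + (64*π*ε/(1-ρ^2)^2 * (x 6)^2
        + 2*(128*π*ε^((5:ℝ)/2)*ρ^3/(1-ρ^2)^5)*(x 6 * x 8)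
        + 2240*π*ε^4/(1-ρ^2)^8 * (x 8)^2)
      + (64*π*ε/(1-ρ^2)^2 * (x 7)^2
        + 2*((-(128*π*ε^((5:ℝ)/2)*ρ^3))/(1-ρ^2)^5)*(x 7 * x 9)
        + 2240*π*ε^4/(1-ρ^2)^8 * (x 9)^2) := by
    simp only [Amat, Matrix.mulVec, dotProduct, Fin.sum_univ_succ, Fin.sum_univ_zero,
      Matrix.cons_val', Matrix.cons_val_zero, Matrix.cons_val_succ, Matrix.empty_val',
      Matrix.cons_val_fin_one, Matrix.of_apply, Pi.star_apply, star_trivial,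
      sc1_0, sc2_0, sc2_1, sc3_0, sc3_1, sc3_2, sc4_0, sc4_1, sc4_2, sc4_3, sc5_0, sc5_1, sc5_2,
      sc5_3, sc5_4, sc6_0, sc6_1, sc6_2, sc6_3, sc6_4, sc6_5, sc7_0, sc7_1, sc7_2, sc7_3, sc7_4,
      sc7_5, sc7_6, sc8_0, sc8_1, sc8_2, sc8_3, sc8_4, sc8_5, sc8_6, sc8_7, sc9_0, sc9_1, sc9_2,
      sc9_3, sc9_4, sc9_5, sc9_6, sc9_7, sc9_8]
    ring
  rw [hcalc, add_mul, add_mul, add_mul, add_mul, add_mul,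
    blk1 _ _ _ _ _ _ hρ', blk1 _ _ _ _ _ _ hρ', blkd _ _ _ hρ', blkd _ _ _ hρ',
    show ((ρ^2-1)^10 : ℝ) = (1-ρ^2)^10 from by ring,
    blk2 _ _ _ _ _ _ hρ, blk2 _ _ _ _ _ _ hρ]

private lemma Amat_isHermitian (ρ ε : ℝ) : (Amat ρ ε).IsHermitian := by
  show (Amat ρ ε).conjTranspose = Amat ρ ε
  ext i j
  fin_cases i <;> fin_cases j <;> rfl


private lemma sum6_pos {T1 T2 T3 T4 T5 T6 : ℝ} (n1 : 0 ≤ T1) (n2 : 0 ≤ T2) (n3 : 0 ≤ T3)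
    (n4 : 0 ≤ T4) (n5 : 0 ≤ T5) (n6 : 0 ≤ T6)
    (h : 0 < T1 ∨ 0 < T2 ∨ 0 < T3 ∨ 0 < T4 ∨ 0 < T5 ∨ 0 < T6) :
    0 < T1 + T2 + T3 + T4 + T5 + T6 := by
  rcases h with h|h|h|h|h|h <;> linarith

set_option maxHeartbeats 2000000 in
/-- For `ρ` close enough to `1`, the matrix `A_{ρ,ε}` is positive definite for every `ε > 0`. -/
theorem Amat_posDef :
    ∃ ρ₀ ∈ Set.Ioo (0 : ℝ) 1, ∀ ρ ∈ Set.Ioo ρ₀ 1, ∀ ε : ℝ, 0 < ε → (Amat ρ ε).PosDef := by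
  refine ⟨1/2, by norm_num, ?_⟩
  rintro ρ ⟨hρl, hρu⟩ ε hε
  have hρ0 : (0:ℝ) < ρ := by linarith
  have hD : (0:ℝ) < 1 - ρ^2 := by nlinarith
  have hDne : (1:ℝ) - ρ^2 ≠ 0 := ne_of_gt hD
  have hCne : (ρ:ℝ)^2 - 1 ≠ 0 := fun h => hDne (by linarith)
  have hπ := Real.pi_pos
  have hs2 : (ε ^ ((3:ℝ)/2))^2 = ε^3 := by
    rw [← Real.rpow_natCast (ε ^ ((3:ℝ)/2)) 2, ← Real.rpow_mul hε.le, ← Real.rpow_natCast ε 3]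
    norm_num
  have ht2 : (ε ^ ((5:ℝ)/2))^2 = ε^5 := by
    rw [← Real.rpow_natCast (ε ^ ((5:ℝ)/2)) 2, ← Real.rpow_mul hε.le, ← Real.rpow_natCast ε 5]
    norm_num
  refine Matrix.PosDef.of_dotProduct_mulVec_pos (Amat_isHermitian ρ ε) fun x hx => ?_
  -- block data
  have hA1 : (0:ℝ) < 128*π*(2*ρ^2+1)*ε := by positivity
  have hd1 : (-(384*π*(ρ^3+ρ)*ε^((3:ℝ)/2)))^2
      < (128*π*(2*ρ^2+1)*ε) * (192*π*(3*ρ^4+6*ρ^2+1)*ε^2) := by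
    have hb : (-(384*π*(ρ^3+ρ)*ε^((3:ℝ)/2)))^2 = 147456*π^2*(ρ^3+ρ)^2*ε^3 := by
      rw [show (-(384*π*(ρ^3+ρ)*ε^((3:ℝ)/2)))^2
        = 147456*π^2*(ρ^3+ρ)^2*(ε^((3:ℝ)/2))^2 from by ring, hs2]
    rw [hb]
    nlinarith [show (0:ℝ) < π^2*ε^3*(3*ρ^4+2*ρ^2+1) from by positivity]
  have hA2 : (0:ℝ) < 32*π*(2*ρ^2+1)*ε^2 := by positivity
  have hd2 : (192*π*ρ*(ρ^2+1)*ε^2)^2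
      < (32*π*(2*ρ^2+1)*ε^2) * (192*π*(3*ρ^4+6*ρ^2+1)*ε^2) := by
    nlinarith [show (0:ℝ) < π^2*ε^4*(3*ρ^4+2*ρ^2+1) from by positivity]
  have hA5 : (0:ℝ) < 64*π*ε := by positivity
  have hρ6 : (0:ℝ) < 1 - ρ^6 := by
    have h6 := pow_lt_one₀ hρ0.le hρu (by norm_num : (6:ℕ) ≠ 0)
    linarith only [h6]
  have hd5 : (128*π*ε^((5:ℝ)/2)*ρ^3)^2 < (64*π*ε) * (2240*π*ε^4) := by
    have hb : (128*π*ε^((5:ℝ)/2)*ρ^3)^2 = 16384*π^2*ρ^6*ε^5 := by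
      rw [show (128*π*ε^((5:ℝ)/2)*ρ^3)^2 = 16384*π^2*ρ^6*(ε^((5:ℝ)/2))^2 from by ring, ht2]
    rw [hb]
    nlinarith [show (0:ℝ) < π^2*ε^5 from by positivity,
      mul_pos (show (0:ℝ) < π^2*ε^5 from by positivity) hρ6]
  have hd6 : (-(128*π*ε^((5:ℝ)/2)*ρ^3))^2 < (64*π*ε) * (2240*π*ε^4) := by
    rw [show (-(128*π*ε^((5:ℝ)/2)*ρ^3))^2 = (128*π*ε^((5:ℝ)/2)*ρ^3)^2 from by ring]
    exact hd5
  -- nonnegativity of all six blocks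
  have n1 := quad_nonneg hA1 hd1 ((ρ^2-1)^3 * x 0) ((ρ^2-1)^2 * x 1)
  have n2 := quad_nonneg hA2 hd2 ((ρ^2-1)^3 * x 4) ((ρ^2-1)^2 * x 2)
  have n3 : (0:ℝ) ≤ 16*π*(2*ρ^2+1)*ε^2 * ((ρ^2-1)^3 * x 3)^2 := by positivity
  have n4 : (0:ℝ) ≤ 16*π*(2*ρ^2+1)*ε^2 * ((ρ^2-1)^3 * x 5)^2 := by positivity
  have n5 := quad_nonneg hA5 hd5 ((1-ρ^2)^4 * x 6) ((1-ρ^2) * x 8)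
  have n6 := quad_nonneg hA5 hd6 ((1-ρ^2)^4 * x 7) ((1-ρ^2) * x 9)
  have hkey := Amat_quadform ρ ε hDne x
  have h10 : (0:ℝ) < (ρ^2-1)^10 := by
    rw [show ((ρ^2-1)^10 : ℝ) = (1-ρ^2)^10 from by ring]
    positivity
  have hC3 : ((ρ:ℝ)^2-1)^3 ≠ 0 := pow_ne_zero 3 hCne
  have hC2 : ((ρ:ℝ)^2-1)^2 ≠ 0 := pow_ne_zero 2 hCne
  have hD4 : ((1:ℝ)-ρ^2)^4 ≠ 0 := pow_ne_zero 4 hDne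
  suffices hT : (0:ℝ) < dotProduct (star x) ((Amat ρ ε).mulVec x) * (ρ^2 - 1)^10 from
    (mul_pos_iff_of_pos_right h10).mp hT
  rw [hkey]
  clear hkey hs2 ht2 hρ6 h10 hπ hρ0 hρl hρu hD
  obtain ⟨i, hi⟩ := Function.ne_iff.mp hx
  fin_cases i
  · replace hi : x 0 ≠ 0 := hi
    have p := quad_pos hA1 hd1 (u := (ρ^2-1)^3 * x 0) (v := (ρ^2-1)^2 * x 1) (Or.inl (mul_ne_zero hC3 hi))
    exact sum6_pos n1 n2 n3 n4 n5 n6 (Or.inl p)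
  · replace hi : x 1 ≠ 0 := hi
    have p := quad_pos hA1 hd1 (u := (ρ^2-1)^3 * x 0) (v := (ρ^2-1)^2 * x 1) (Or.inr (mul_ne_zero hC2 hi))
    exact sum6_pos n1 n2 n3 n4 n5 n6 (Or.inl p)
  · replace hi : x 2 ≠ 0 := hi
    have p := quad_pos hA2 hd2 (u := (ρ^2-1)^3 * x 4) (v := (ρ^2-1)^2 * x 2) (Or.inr (mul_ne_zero hC2 hi))
    exact sum6_pos n1 n2 n3 n4 n5 n6 (Or.inr (Or.inl p))
  · replace hi : x 3 ≠ 0 := hi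
    have hu : (ρ^2-1)^3 * x 3 ≠ 0 := mul_ne_zero hC3 hi
    have p : (0:ℝ) < 16*π*(2*ρ^2+1)*ε^2 * ((ρ^2-1)^3 * x 3)^2 :=
      mul_pos (show (0:ℝ) < 16*π*(2*ρ^2+1)*ε^2 by positivity)
        (lt_of_le_of_ne (sq_nonneg _) (Ne.symm (pow_ne_zero 2 hu)))
    exact sum6_pos n1 n2 n3 n4 n5 n6 (Or.inr (Or.inr (Or.inl p)))
  · replace hi : x 4 ≠ 0 := hi
    have p := quad_pos hA2 hd2 (u := (ρ^2-1)^3 * x 4) (v := (ρ^2-1)^2 * x 2) (Or.inl (mul_ne_zero hC3 hi))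
    exact sum6_pos n1 n2 n3 n4 n5 n6 (Or.inr (Or.inl p))
  · replace hi : x 5 ≠ 0 := hi
    have hu : (ρ^2-1)^3 * x 5 ≠ 0 := mul_ne_zero hC3 hi
    have p : (0:ℝ) < 16*π*(2*ρ^2+1)*ε^2 * ((ρ^2-1)^3 * x 5)^2 :=
      mul_pos (show (0:ℝ) < 16*π*(2*ρ^2+1)*ε^2 by positivity)
        (lt_of_le_of_ne (sq_nonneg _) (Ne.symm (pow_ne_zero 2 hu)))
    exact sum6_pos n1 n2 n3 n4 n5 n6 (Or.inr (Or.inr (Or.inr (Or.inl p))))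
  · replace hi : x 6 ≠ 0 := hi
    have p := quad_pos hA5 hd5 (u := (1-ρ^2)^4 * x 6) (v := (1-ρ^2) * x 8) (Or.inl (mul_ne_zero hD4 hi))
    exact sum6_pos n1 n2 n3 n4 n5 n6 (Or.inr (Or.inr (Or.inr (Or.inr (Or.inl p)))))
  · replace hi : x 7 ≠ 0 := hi
    have p := quad_pos hA5 hd6 (u := (1-ρ^2)^4 * x 7) (v := (1-ρ^2) * x 9) (Or.inl (mul_ne_zero hD4 hi))
    exact sum6_pos n1 n2 n3 n4 n5 n6 (Or.inr (Or.inr (Or.inr (Or.inr (Or.inr p)))))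
  · replace hi : x 8 ≠ 0 := hi
    have p := quad_pos hA5 hd5 (u := (1-ρ^2)^4 * x 6) (v := (1-ρ^2) * x 8) (Or.inr (mul_ne_zero hDne hi))
    exact sum6_pos n1 n2 n3 n4 n5 n6 (Or.inr (Or.inr (Or.inr (Or.inr (Or.inl p)))))
  · replace hi : x 9 ≠ 0 := hi
    have p := quad_pos hA5 hd6 (u := (1-ρ^2)^4 * x 7) (v := (1-ρ^2) * x 9) (Or.inr (mul_ne_zero hDne hi))
    exact sum6_pos n1 n2 n3 n4 n5 n6 (Or.inr (Or.inr (Or.inr (Or.inr (Or.inr p)))))
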